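/- Let (A_A, A_B, A_C) be a three-composed graded quantum system of finite-dimensional factors generating A_Z, satisfying the commuting square condition for (A_AB, A_BC, A_B), and let ψ be a faithful state on A_Z. Define α(X) := ρ_{ψ_B}^{−1/2} E_AB(ρ_{ψ_BC}^{1/2} X ρ_{ψ_BC}^{1/2}) ρ_{ψ_B}^{−1/2} for X ∈ A_Z. Then every element of the even part A_A^+ of A_A is a fixed point of α, i.e. α(X) = X for all X ∈ A_A^+. -/

import Mathlib

open scoped ComplexOrder

/-- The full matrix algebra `M_N(ℂ)`, our model of a finite-dimensional factor. -/
abbrev Mat (N : ℕ) := Matrix (Fin N) (Fin N) ℂ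

variable {N : ℕ}

/-- The tracial state `τ` on `Mat N`. -/
noncomputable def tau (x : Mat N) : ℂ := x.trace / N

/-- Matrix logarithm via the continuous functional calculus. -/
noncomputable def mlog (x : Mat N) : Mat N := cfc Real.log x

/-- Matrix square root via the continuous functional calculus. -/
noncomputable def msqrt (x : Mat N) : Mat N := cfc Real.sqrt x

/-- Matrix inverse square root via the continuous functional calculus. -/
noncomputable def misqrt (x : Mat N) : Mat N := cfc (fun t : ℝ => (Real.sqrt t)⁻¹) x

/-- The entropy `Ŝ(ψ) = -ψ(log ρ_ψ) = -τ(ρ log ρ)` of the state with τ-density `ρ`. -/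
noncomputable def Shat (ρ : Mat N) : ℝ := -(tau (ρ * mlog ρ)).re

/-- The von Neumann entropy `S(ψ|_B) = -Tr_B(D log D) = Ŝ(ψ|_B) + log k` of the
restriction of a state to a subfactor `B ≅ M_k`, expressed through the τ-density `ρ`
of the restriction and the matrix size `k` of the subfactor. -/
noncomputable def Sres (ρ : Mat N) (k : ℕ) : ℝ := Shat ρ + Real.log k

/-- `ρ` is the density with respect to the tracial state `τ` of a state of `Mat N`. -/
def IsTauDensity (ρ : Mat N) : Prop := ρ.PosSemidef ∧ tau ρ = 1

/-- `E` is the τ-preserving conditional expectation onto the unital *-subalgebra `B`: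
it maps into `B`, fixes `B` pointwise, and `Tr(b x) = Tr(b (E x))` for all `b ∈ B`.
These properties determine `E` uniquely. -/
def IsCondExp (B : StarSubalgebra ℂ (Mat N)) (E : Mat N →ₗ[ℂ] Mat N) : Prop :=
  (∀ x, E x ∈ B) ∧ (∀ b ∈ B, E b = b) ∧
    (∀ x : Mat N, ∀ b ∈ B, (b * x).trace = (b * E x).trace)

/-- `B` is a subfactor: its relative center is trivial (so `B` is a full matrix algebra). -/
def IsFactorSub (B : StarSubalgebra ℂ (Mat N)) : Prop :=
  ∀ x ∈ B, (∀ y ∈ B, x * y = y * x) → ∃ c : ℂ, x = c • (1 : Mat N)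

/-- The commuting square condition: `B = AB ⊓ BC` and `E_AB ∘ E_BC = E_BC ∘ E_AB = E_B`. -/
def CommSquare (AB BC B : StarSubalgebra ℂ (Mat N))
    (EAB EBC EB : Mat N →ₗ[ℂ] Mat N) : Prop :=
  IsCondExp AB EAB ∧ IsCondExp BC EBC ∧ IsCondExp B EB ∧
    B = AB ⊓ BC ∧ (∀ x, EAB (EBC x) = EB x) ∧ (∀ x, EBC (EAB x) = EB x)

open Classical in
/-- Relative entropy `H(ρ₁, ρ₂) = τ(ρ₁ (log ρ₁ - log ρ₂))` of two τ-densities, equal to `+∞`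
unless the support of `ρ₁` is dominated by the support of `ρ₂` (for positive semidefinite
matrices the support condition is the inclusion of kernels `ker ρ₂ ⊆ ker ρ₁`). -/
noncomputable def relEnt (ρ₁ ρ₂ : Mat N) : EReal :=
  if ∀ v : Fin N → ℂ, ρ₂.mulVec v = 0 → ρ₁.mulVec v = 0 then
    (((tau (ρ₁ * (mlog ρ₁ - mlog ρ₂))).re : ℝ) : EReal)
  else ⊤

/-- Complete positivity of a linear map on `Mat N`. -/
def IsCP (E : Mat N →ₗ[ℂ] Mat N) : Prop :=
  ∀ (k : ℕ) (x a : Fin k → Mat N),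
    (∑ i, ∑ j, star (a i) * E (star (x i) * x j) * a j).PosSemidef

/-- `p` is a minimal projection of the subalgebra `B`. -/
def IsMinProj (B : StarSubalgebra ℂ (Mat N)) (p : Mat N) : Prop :=
  p ∈ B ∧ p.IsHermitian ∧ p * p = p ∧ p ≠ 0 ∧
    ∀ q ∈ B, q.IsHermitian → q * q = q → q * p = q → q = 0 ∨ q = p

/-- The subfactor `B` of `Mat N` has matrix size `k` (i.e. `B ≅ M_k`) in the sense that its
minimal projections have ambient matrix trace `N / k`; this encodes the assumption that the
ambient matrix trace restricts on `B` to `N/k` times the canonical matrix trace of `B`. -/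
def HasMatSize (B : StarSubalgebra ℂ (Mat N)) (k : ℕ) : Prop :=
  ∀ p, IsMinProj B p → Matrix.trace p = ((N : ℂ) / k)

/-- `Θ` is a grading: an involutive *-automorphism. -/
def IsGrading (Θ : Mat N ≃⋆ₐ[ℂ] Mat N) : Prop := ∀ x, Θ (Θ x) = x

/-- The subalgebra `A` is invariant under the grading. -/
def ThetaInvariant (Θ : Mat N ≃⋆ₐ[ℂ] Mat N) (A : StarSubalgebra ℂ (Mat N)) : Prop :=
  ∀ x ∈ A, Θ x ∈ A

/-- Graded commutation relations between (the subalgebras of) two disjoint regions: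
even elements of one commute with all elements of the other, odd elements anticommute. -/
def GradedComm (Θ : Mat N ≃⋆ₐ[ℂ] Mat N) (A C : StarSubalgebra ℂ (Mat N)) : Prop :=
  ∀ x ∈ A, ∀ y ∈ C,
    ((Θ x = x ∨ Θ y = y) → x * y = y * x) ∧
      (Θ x = -x → Θ y = -y → x * y + y * x = 0)

/-- `ω` is a state (positive normalized linear functional). -/
def IsState (ω : Mat N →ₗ[ℂ] ℂ) : Prop :=
  ω 1 = 1 ∧ ∀ x : Mat N, 0 ≤ ω (star x * x)

/-- Markov property of the state `ω` with respect to a triplet with first algebra `AA` and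
pair algebra `AB`: there is a quasi-conditional expectation (a completely positive map into
`AB` which is a module map over `AA`) fixing `AA` pointwise and preserving `ω`. -/
def IsMarkovState (AA AB : StarSubalgebra ℂ (Mat N)) (ω : Mat N →ₗ[ℂ] ℂ) : Prop :=
  ∃ E : Mat N →ₗ[ℂ] Mat N, IsCP E ∧ (∀ x, E x ∈ AB) ∧
    (∀ c ∈ AA, ∀ x, E (c * x) = c * E x) ∧ (∀ c ∈ AA, E c = c) ∧
    ∀ x, ω (E x) = ω x

/-- Markov property, formulated for the state with τ-density `ρ`. -/
def IsMarkovDensity (AA AB : StarSubalgebra ℂ (Mat N)) (ρ : Mat N) : Prop :=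
  ∃ E : Mat N →ₗ[ℂ] Mat N, IsCP E ∧ (∀ x, E x ∈ AB) ∧
    (∀ c ∈ AA, ∀ x, E (c * x) = c * E x) ∧ (∀ c ∈ AA, E c = c) ∧
    ∀ x, tau (ρ * E x) = tau (ρ * x)

/-- The restriction of `ω` to the subalgebra generated by `AA` and `AC` is separable:
a convex combination of product states for the pair `(AA, AC)`. -/
def SeparableOn (AA AC : StarSubalgebra ℂ (Mat N)) (ω : Mat N →ₗ[ℂ] ℂ) : Prop :=
  ∃ (n : ℕ) (lam : Fin n → ℝ) (ωi : Fin n → (Mat N →ₗ[ℂ] ℂ)),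
    (∀ i, 0 ≤ lam i) ∧ (∑ i, lam i = 1) ∧ (∀ i, IsState (ωi i)) ∧
    (∀ i, ∀ x ∈ AA, ∀ y ∈ AC, ωi i (x * y) = ωi i x * ωi i y) ∧
    ∀ z ∈ (AA ⊔ AC : StarSubalgebra ℂ (Mat N)), ω z = ∑ i, (lam i : ℂ) * ωi i z

/-- The conditional expectation `E` is sufficient for the pair of states with τ-densities
`ρ₁, ρ₂`: some completely positive trace-preserving (recovery) map `T` recovers the densities
from their compressions `E ρ₁`, `E ρ₂` (recall that the τ-density of `ψ ∘ E` is `E ρ_ψ`). -/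
def IsSufficient (E : Mat N →ₗ[ℂ] Mat N) (ρ₁ ρ₂ : Mat N) : Prop :=
  ∃ T : Mat N →ₗ[ℂ] Mat N, IsCP T ∧ (∀ x, (T x).trace = x.trace) ∧
    T (E ρ₁) = ρ₁ ∧ T (E ρ₂) = ρ₂

/-! ### Auxiliary lemmas for `stmt10` -/

namespace Stmt10Aux

open Matrix

variable {N : ℕ}

lemma trace_conjTranspose_mul (B : Mat N) :
    (Bᴴ * B).trace = ((∑ i, ∑ j, Complex.normSq (B j i) : ℝ) : ℂ) := by
  push_cast
  simp only [Matrix.trace, Matrix.diag_apply, Matrix.mul_apply, Matrix.conjTranspose_apply]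
  refine Finset.sum_congr rfl fun i _ => Finset.sum_congr rfl fun j _ => ?_
  rw [Complex.star_def, mul_comm, Complex.mul_conj]

lemma psd_trace_re_nonneg {M : Mat N} (hM : M.PosSemidef) : 0 ≤ M.trace.re := by
  obtain ⟨B, rfl⟩ : ∃ B : Mat N, M = Bᴴ * B := by
    open scoped MatrixOrder in
    obtain ⟨B, rfl⟩ := CStarAlgebra.nonneg_iff_eq_star_mul_self.mp hM.nonneg
    exact ⟨B, rfl⟩
  rw [trace_conjTranspose_mul, Complex.ofReal_re]
  exact Finset.sum_nonneg fun i _ => Finset.sum_nonneg fun j _ => Complex.normSq_nonneg _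

lemma psd_eq_zero_of_trace_re {M : Mat N} (hM : M.PosSemidef) (h : M.trace.re ≤ 0) :
    M = 0 := by
  obtain ⟨B, rfl⟩ : ∃ B : Mat N, M = Bᴴ * B := by
    open scoped MatrixOrder in
    obtain ⟨B, rfl⟩ := CStarAlgebra.nonneg_iff_eq_star_mul_self.mp hM.nonneg
    exact ⟨B, rfl⟩
  rw [trace_conjTranspose_mul, Complex.ofReal_re] at h
  have hB : B = 0 := by
    ext j i
    have h1 : ∀ i ∈ Finset.univ, (0:ℝ) ≤ ∑ j, Complex.normSq (B j i) :=
      fun i _ => Finset.sum_nonneg fun j _ => Complex.normSq_nonneg _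
    have h2 : ∑ i, ∑ j, Complex.normSq (B j i) = 0 :=
      le_antisymm h (Finset.sum_nonneg h1)
    have h3 := (Finset.sum_eq_zero_iff_of_nonneg h1).mp h2 i (Finset.mem_univ i)
    have h4 := (Finset.sum_eq_zero_iff_of_nonneg
      (fun j _ => Complex.normSq_nonneg (B j i))).mp h3 j (Finset.mem_univ j)
    simpa using Complex.normSq_eq_zero.mp h4
  rw [hB]; simp

/-- Pairing of a positive semidefinite matrix against a positive definite one. -/
lemma psd_zero_of_pairing {ρ q : Mat N} (hρ : ρ.PosDef) (hq : q.PosSemidef)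
    (h : ((q * ρ).trace).re ≤ 0) : q = 0 := by
  open scoped MatrixOrder in
  set r := CFC.sqrt q with hr
  have hrr : r * r = q := by
    open scoped MatrixOrder in exact CFC.sqrt_mul_sqrt_self q hq.nonneg
  have hrherm : rᴴ = r := by
    open scoped MatrixOrder in exact (CFC.sqrt_nonneg q).posSemidef.isHermitian
  have htr : (q * ρ).trace = (r * ρ * r).trace := by
    rw [← hrr, mul_assoc, trace_mul_comm, mul_assoc]
  have hMpsd : (r * ρ * r).PosSemidef := by
    have := hρ.posSemidef.mul_mul_conjTranspose_same r
    rwa [hrherm] at this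
  have hM0 : r * ρ * r = 0 := psd_eq_zero_of_trace_re hMpsd (by rw [← htr]; exact h)
  open scoped MatrixOrder in
  set t := CFC.sqrt ρ with ht
  have htt : t * t = ρ := by
    open scoped MatrixOrder in exact CFC.sqrt_mul_sqrt_self ρ hρ.posSemidef.nonneg
  have htherm : tᴴ = t := by
    open scoped MatrixOrder in exact (CFC.sqrt_nonneg ρ).posSemidef.isHermitian
  have hrt : (r * t) * (r * t)ᴴ = 0 := by
    rw [conjTranspose_mul, htherm, hrherm]
    calc r * t * (t * r) = r * (t * t) * r := by simp only [mul_assoc]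
    _ = r * ρ * r := by rw [htt]
    _ = 0 := hM0
  have hrt0 : r * t = 0 := by
    have := Matrix.conjTranspose_mul_self_eq_zero (A := (r * t)ᴴ)
    rw [conjTranspose_conjTranspose] at this
    have h2 : (r * t)ᴴ = 0 := this.mp hrt
    simpa using congrArg conjTranspose h2
  have hrρ : r * ρ = 0 := by
    rw [← htt, ← mul_assoc, hrt0, zero_mul]
  have hr0 : r = 0 := by
    have hdet : IsUnit ρ.det := isUnit_iff_ne_zero.mpr hρ.det_pos.ne'
    calc r = r * (ρ * ρ⁻¹) := by rw [Matrix.mul_nonsing_inv _ hdet, mul_one]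
    _ = (r * ρ) * ρ⁻¹ := by rw [mul_assoc]
    _ = 0 := by rw [hrρ, zero_mul]
  rw [← hrr, hr0, zero_mul]

section HermCfc

variable {σ : Mat N} (hσ : σ.IsHermitian)

lemma star_mul_self_unitary :
    star (hσ.eigenvectorUnitary : Mat N) * (hσ.eigenvectorUnitary : Mat N) = 1 :=
  Matrix.mem_unitaryGroup_iff'.mp hσ.eigenvectorUnitary.2

lemma mul_star_self_unitary :
    (hσ.eigenvectorUnitary : Mat N) * star (hσ.eigenvectorUnitary : Mat N) = 1 :=
  Matrix.mem_unitaryGroup_iff.mp hσ.eigenvectorUnitary.2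

lemma hcfc_mul (f g : ℝ → ℝ) :
    hσ.cfc f * hσ.cfc g = hσ.cfc fun t => f t * g t := by
  simp only [Matrix.IsHermitian.cfc]
  set U := (hσ.eigenvectorUnitary : Mat N)
  have hdiag : (diagonal (RCLike.ofReal ∘ f ∘ hσ.eigenvalues) : Mat N) *
      diagonal (RCLike.ofReal ∘ g ∘ hσ.eigenvalues)
      = diagonal (RCLike.ofReal ∘ (fun t => f t * g t) ∘ hσ.eigenvalues) := by
    rw [diagonal_mul_diagonal]
    exact congrArg diagonal (funext fun i => by simp [Function.comp])
  calc U * diagonal (RCLike.ofReal ∘ f ∘ hσ.eigenvalues) * star U *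
        (U * diagonal (RCLike.ofReal ∘ g ∘ hσ.eigenvalues) * star U)
      = U * (diagonal (RCLike.ofReal ∘ f ∘ hσ.eigenvalues) * (star U * U) *
          diagonal (RCLike.ofReal ∘ g ∘ hσ.eigenvalues)) * star U := by
        simp only [mul_assoc]
    _ = U * (diagonal (RCLike.ofReal ∘ f ∘ hσ.eigenvalues) *
          diagonal (RCLike.ofReal ∘ g ∘ hσ.eigenvalues)) * star U := by
        rw [star_mul_self_unitary, mul_one]
    _ = U * diagonal (RCLike.ofReal ∘ (fun t => f t * g t) ∘ hσ.eigenvalues) * star U := by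
        rw [hdiag]

lemma hcfc_congr {f g : ℝ → ℝ} (h : ∀ i, f (hσ.eigenvalues i) = g (hσ.eigenvalues i)) :
    hσ.cfc f = hσ.cfc g := by
  simp only [Matrix.IsHermitian.cfc]
  have : (RCLike.ofReal ∘ f ∘ hσ.eigenvalues : Fin N → ℂ)
      = RCLike.ofReal ∘ g ∘ hσ.eigenvalues := by
    funext i
    simp [Function.comp, h i]
  rw [this]

lemma hcfc_one : hσ.cfc (fun _ => 1) = 1 := by
  simp only [Matrix.IsHermitian.cfc, Unitary.conjStarAlgAut_apply]
  have h1 : (RCLike.ofReal ∘ (fun _ : ℝ => (1:ℝ)) ∘ hσ.eigenvalues : Fin N → ℂ)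
      = fun _ => 1 := by funext i; simp [Function.comp]
  rw [h1, diagonal_one, mul_one, mul_star_self_unitary]

lemma hcfc_zero : hσ.cfc (fun _ => 0) = 0 := by
  simp only [Matrix.IsHermitian.cfc, Unitary.conjStarAlgAut_apply]
  have h1 : (RCLike.ofReal ∘ (fun _ : ℝ => (0:ℝ)) ∘ hσ.eigenvalues : Fin N → ℂ)
      = fun _ => 0 := by funext i; simp [Function.comp]
  rw [h1, diagonal_zero, mul_zero, zero_mul]

lemma hcfc_id : hσ.cfc (fun t => t) = σ := by
  simp only [Matrix.IsHermitian.cfc]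
  have h1 : (RCLike.ofReal ∘ (fun t : ℝ => t) ∘ hσ.eigenvalues : Fin N → ℂ)
      = RCLike.ofReal ∘ hσ.eigenvalues := rfl
  rw [h1, ← hσ.spectral_theorem]

lemma hcfc_neg (f : ℝ → ℝ) : hσ.cfc (fun t => -(f t)) = -(hσ.cfc f) := by
  simp only [Matrix.IsHermitian.cfc, Unitary.conjStarAlgAut_apply]
  have h1 : (diagonal (RCLike.ofReal ∘ (fun t => -(f t)) ∘ hσ.eigenvalues) : Mat N)
      = -diagonal (RCLike.ofReal ∘ f ∘ hσ.eigenvalues) := by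
    rw [diagonal_neg]
    exact congrArg diagonal (funext fun i => by simp [Function.comp])
  rw [h1, mul_neg, neg_mul]

lemma hcfc_eq_zero_iff (f : ℝ → ℝ) :
    hσ.cfc f = 0 ↔ ∀ i, f (hσ.eigenvalues i) = 0 := by
  constructor
  · intro h
    have h2 : diagonal (RCLike.ofReal ∘ f ∘ hσ.eigenvalues) = (0 : Mat N) := by
      have := congrArg (fun M => star (hσ.eigenvectorUnitary : Mat N) * M *
        (hσ.eigenvectorUnitary : Mat N)) h
      simp only [Matrix.IsHermitian.cfc, Unitary.conjStarAlgAut_apply] at this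
      calc diagonal (RCLike.ofReal ∘ f ∘ hσ.eigenvalues)
          = (star (hσ.eigenvectorUnitary : Mat N) * (hσ.eigenvectorUnitary : Mat N)) *
            diagonal (RCLike.ofReal ∘ f ∘ hσ.eigenvalues) *
            ((star (hσ.eigenvectorUnitary : Mat N)) * (hσ.eigenvectorUnitary : Mat N)) := by
            rw [star_mul_self_unitary]; rw [one_mul, mul_one]
        _ = star (hσ.eigenvectorUnitary : Mat N) *
            ((hσ.eigenvectorUnitary : Mat N) * diagonal (RCLike.ofReal ∘ f ∘ hσ.eigenvalues) *
              star (hσ.eigenvectorUnitary : Mat N)) * (hσ.eigenvectorUnitary : Mat N) := by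
            simp only [mul_assoc]
        _ = 0 := by rw [this]; simp
    intro i
    have := congrFun (congrFun h2 i) i
    simp only [diagonal_apply_eq, Function.comp, Matrix.zero_apply] at this
    exact RCLike.ofReal_eq_zero.mp this
  · intro h
    have : hσ.cfc f = hσ.cfc (fun _ => 0) := hcfc_congr hσ (fun i => h i)
    rw [this, hcfc_zero]

lemma hcfc_psd {f : ℝ → ℝ} (h : ∀ i, 0 ≤ f (hσ.eigenvalues i)) :
    (hσ.cfc f).PosSemidef := by
  simp only [Matrix.IsHermitian.cfc, Unitary.conjStarAlgAut_apply]
  rw [Matrix.star_eq_conjTranspose]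
  refine Matrix.PosSemidef.mul_mul_conjTranspose_same ?_ _
  refine Matrix.PosSemidef.diagonal ?_
  intro i
  have h2 : (0:ℂ) ≤ RCLike.ofReal (f (hσ.eigenvalues i)) := RCLike.ofReal_nonneg.mpr (h i)
  simpa [Function.comp] using h2

lemma hcfc_mem (S : StarSubalgebra ℂ (Mat N)) (hmem : σ ∈ S) (f : ℝ → ℝ) :
    hσ.cfc f ∈ S := by
  classical
  set s : Finset ℝ := Finset.image hσ.eigenvalues Finset.univ with hs
  set p : Polynomial ℝ := Lagrange.interpolate s id f with hp
  have heval : ∀ i, p.eval (hσ.eigenvalues i) = f (hσ.eigenvalues i) := by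
    intro i
    have hmem' : hσ.eigenvalues i ∈ s := Finset.mem_image_of_mem _ (Finset.mem_univ i)
    exact Lagrange.eval_interpolate_at_node f (Set.injOn_id _) hmem'
  have h1 : hσ.cfc f = hσ.cfc (fun t => p.eval t) := hcfc_congr hσ (fun i => (heval i).symm)
  have h2 : hσ.cfc (fun t => p.eval t) = cfc (fun t => p.eval t) σ := (hσ.cfc_eq _).symm
  have h3 : cfc (fun t => p.eval t) σ = Polynomial.aeval σ p := cfc_polynomial p σ hσ
  rw [h1, h2, h3, Polynomial.aeval_eq_sum_range]
  refine sum_mem fun i _ => ?_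
  rw [← algebraMap_smul ℂ (p.coeff i) (σ ^ i)]
  exact SMulMemClass.smul_mem _ (pow_mem hmem i)

end HermCfc

section CondExp

variable {B : StarSubalgebra ℂ (Mat N)} {E : Mat N →ₗ[ℂ] Mat N}

lemma orth_eq_zero {z : Mat N} (hz : z ∈ B)
    (h : ∀ b ∈ B, (b * z).trace = 0) : z = 0 := by
  have h1 := h (star z) (star_mem hz)
  rw [Matrix.star_eq_conjTranspose] at h1
  have h2 : (zᴴ * z) = 0 :=
    psd_eq_zero_of_trace_re (Matrix.posSemidef_conjTranspose_mul_self z) (by rw [h1]; simp)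
  exact Matrix.conjTranspose_mul_self_eq_zero.mp h2

lemma condexp_herm (hE : IsCondExp B E) {ρ : Mat N} (hρ : ρ.IsHermitian) :
    (E ρ).IsHermitian := by
  have key : ∀ b ∈ B, (b * ((E ρ)ᴴ - E ρ)).trace = 0 := by
    intro b hb
    have h1 : (b * (E ρ)ᴴ).trace = (b * E ρ).trace := by
      have e1 : b * (E ρ)ᴴ = (E ρ * bᴴ)ᴴ := by
        rw [Matrix.conjTranspose_mul, Matrix.conjTranspose_conjTranspose]
      have e2 : (bᴴ * ρ).trace = (bᴴ * E ρ).trace :=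
        hE.2.2 ρ bᴴ (by rw [← Matrix.star_eq_conjTranspose]; exact star_mem hb)
      calc (b * (E ρ)ᴴ).trace = star ((E ρ * bᴴ).trace) := by
            rw [e1, Matrix.trace_conjTranspose]
        _ = star ((bᴴ * E ρ).trace) := by rw [Matrix.trace_mul_comm]
        _ = star ((bᴴ * ρ).trace) := by rw [e2]
        _ = ((bᴴ * ρ)ᴴ).trace := by rw [Matrix.trace_conjTranspose]
        _ = (ρᴴ * b).trace := by rw [Matrix.conjTranspose_mul,
            Matrix.conjTranspose_conjTranspose]
        _ = (ρ * b).trace := by rw [hρ]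
        _ = (b * ρ).trace := by rw [Matrix.trace_mul_comm]
        _ = (b * E ρ).trace := hE.2.2 ρ b hb
    rw [mul_sub, Matrix.trace_sub, h1, sub_self]
  have hmem : (E ρ)ᴴ - E ρ ∈ B := by
    refine sub_mem ?_ (hE.1 ρ)
    rw [← Matrix.star_eq_conjTranspose]
    exact star_mem (hE.1 ρ)
  have := orth_eq_zero hmem key
  exact sub_eq_zero.mp this

lemma condexp_mul_left (hE : IsCondExp B E) {X : Mat N} (hX : X ∈ B) (y : Mat N) :
    E (X * y) = X * E y := by
  have key : ∀ b ∈ B, (b * (E (X * y) - X * E y)).trace = 0 := by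
    intro b hb
    have h1 : (b * E (X * y)).trace = ((b * X) * y).trace := by
      rw [← hE.2.2 (X * y) b hb, mul_assoc]
    have h2 : (b * (X * E y)).trace = ((b * X) * y).trace := by
      rw [← mul_assoc, ← hE.2.2 y (b * X) (mul_mem hb hX)]
    rw [mul_sub, Matrix.trace_sub, h1, h2, sub_self]
  have hmem : E (X * y) - X * E y ∈ B :=
    sub_mem (hE.1 _) (mul_mem hX (hE.1 y))
  exact sub_eq_zero.mp (orth_eq_zero hmem key)

lemma condexp_eigen_pos (hE : IsCondExp B E) {ρ : Mat N} (hρ : ρ.PosDef)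
    (hσ : (E ρ).IsHermitian) (i : Fin N) : 0 < hσ.eigenvalues i := by
  -- Step 1: eigenvalues are nonnegative
  have hnonneg : ∀ j, 0 ≤ hσ.eigenvalues j := by
    intro j
    have hqpsd : (hσ.cfc fun t => max (-t) 0 * max (-t) 0).PosSemidef :=
      hcfc_psd hσ (fun k => mul_self_nonneg _)
    have hqB : (hσ.cfc fun t => max (-t) 0 * max (-t) 0) ∈ B := hcfc_mem hσ B (hE.1 ρ) _
    have hprod : (hσ.cfc fun t => max (-t) 0 * max (-t) 0) * E ρ
        = -(hσ.cfc fun t => max (-t) 0 * max (-t) 0 * max (-t) 0) := by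
      have e1 : (hσ.cfc fun t => max (-t) 0 * max (-t) 0) * hσ.cfc (fun t => t)
          = hσ.cfc (fun t => (max (-t) 0 * max (-t) 0) * t) := hcfc_mul hσ _ _
      rw [hcfc_id] at e1
      rw [e1, ← hcfc_neg]
      refine hcfc_congr hσ (fun k => ?_)
      rcases le_total 0 (hσ.eigenvalues k) with h | h
      · have hg0 : max (-(hσ.eigenvalues k)) 0 = 0 := max_eq_right (neg_nonpos.mpr h)
        rw [hg0]; ring
      · have hg0 : max (-(hσ.eigenvalues k)) 0 = -(hσ.eigenvalues k) :=
          max_eq_left (neg_nonneg.mpr h)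
        rw [hg0]; ring
    have htr : (((hσ.cfc fun t => max (-t) 0 * max (-t) 0) * ρ).trace).re ≤ 0 := by
      rw [hE.2.2 ρ _ hqB, hprod, Matrix.trace_neg]
      have h3 := psd_trace_re_nonneg (hcfc_psd hσ
        (f := fun t => max (-t) 0 * max (-t) 0 * max (-t) 0)
        (fun k => mul_nonneg (mul_self_nonneg _) (le_max_right _ _)))
      simpa using h3
    have hq0 : (hσ.cfc fun t => max (-t) 0 * max (-t) 0) = 0 :=
      psd_zero_of_pairing hρ hqpsd htr
    have h4 := (hcfc_eq_zero_iff hσ _).mp hq0 j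
    have hgj : max (-(hσ.eigenvalues j)) 0 = 0 := mul_self_eq_zero.mp h4
    have h5 : -(hσ.eigenvalues j) ≤ 0 := by
      by_contra hcon
      push_neg at hcon
      rw [max_eq_left hcon.le] at hgj
      linarith
    linarith
  -- Step 2: the eigenvalue is nonzero
  have hne : hσ.eigenvalues i ≠ 0 := by
    intro h0
    set f : ℝ → ℝ := fun t => ∏ j, (1 - t / hσ.eigenvalues j) with hf
    have hqpsd : (hσ.cfc fun t => f t * f t).PosSemidef :=
      hcfc_psd hσ (fun k => mul_self_nonneg _)
    have hqB : (hσ.cfc fun t => f t * f t) ∈ B := hcfc_mem hσ B (hE.1 ρ) _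
    have hprod : (hσ.cfc fun t => f t * f t) * E ρ = 0 := by
      have e1 : (hσ.cfc fun t => f t * f t) * hσ.cfc (fun t => t)
          = hσ.cfc (fun t => (f t * f t) * t) := hcfc_mul hσ _ _
      rw [hcfc_id] at e1
      rw [e1]
      refine (hcfc_eq_zero_iff hσ _).mpr (fun k => ?_)
      rcases eq_or_ne (hσ.eigenvalues k) 0 with hk | hk
      · rw [hk, mul_zero]
      · have hfk : f (hσ.eigenvalues k) = 0 := by
          rw [hf]
          refine Finset.prod_eq_zero (Finset.mem_univ k) ?_
          rw [div_self hk, sub_self]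
        rw [hfk, mul_zero, zero_mul]
    have htr : (((hσ.cfc fun t => f t * f t) * ρ).trace).re ≤ 0 := by
      rw [hE.2.2 ρ _ hqB, hprod]
      simp
    have hq0 : (hσ.cfc fun t => f t * f t) = 0 := psd_zero_of_pairing hρ hqpsd htr
    have hfz := (hcfc_eq_zero_iff hσ _).mp hq0 i
    have hf1 : f (hσ.eigenvalues i) = 1 := by
      rw [h0, hf]
      simp
    rw [hf1] at hfz
    norm_num at hfz
  exact lt_of_le_of_ne (hnonneg i) (Ne.symm hne)

end CondExp

end Stmt10Aux

/-- for a three-composed graded quantum system with commuting square and a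
faithful state `ψ` (τ-density `ρ`), every even element of `S_A` is a fixed point of
`α(X) = ρ_{ψB}^{-1/2} E_AB(ρ_{ψBC}^{1/2} X ρ_{ψBC}^{1/2}) ρ_{ψB}^{-1/2}`. -/
theorem stmt10 {N : ℕ} (hN : 0 < N)
    (Θ : Mat N ≃⋆ₐ[ℂ] Mat N) (hΘ : IsGrading Θ)
    (SA SB SC : StarSubalgebra ℂ (Mat N))
    (hAinv : ThetaInvariant Θ SA) (hBinv : ThetaInvariant Θ SB) (hCinv : ThetaInvariant Θ SC)
    (hfA : IsFactorSub SA) (hfB : IsFactorSub SB) (hfC : IsFactorSub SC)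
    (hABc : GradedComm Θ SA SB) (hACc : GradedComm Θ SA SC) (hBCc : GradedComm Θ SB SC)
    (hgen : SA ⊔ SB ⊔ SC = ⊤)
    (EAB EBC EB : Mat N →ₗ[ℂ] Mat N)
    (hsq : CommSquare (SA ⊔ SB) (SB ⊔ SC) SB EAB EBC EB)
    (ρ : Mat N) (hρpd : ρ.PosDef) (hρ1 : tau ρ = 1) :
    ∀ X ∈ SA, Θ X = X →
      misqrt (EB ρ) * EAB (msqrt (EBC ρ) * X * msqrt (EBC ρ)) * misqrt (EB ρ) = X := by
  classical
  intro X hX hXeven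
  obtain ⟨hEAB, hEBC, hEB, hBeq, hsq1, hsq2⟩ := hsq
  -- the centralizer of X
  set K : StarSubalgebra ℂ (Mat N) := StarSubalgebra.centralizer ℂ {X} with hK
  have hXstar_mem : star X ∈ SA := star_mem hX
  have hXstar_even : Θ (star X) = star X := by
    rw [map_star, hXeven]
  have hSBK : SB ≤ K := by
    intro y hy
    rw [hK, StarSubalgebra.mem_centralizer_iff]
    rintro g (rfl : g = X)
    exact ⟨(hABc _ hX y hy).1 (Or.inl hXeven),
      (hABc _ hXstar_mem y hy).1 (Or.inl hXstar_even)⟩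
  have hSCK : SC ≤ K := by
    intro y hy
    rw [hK, StarSubalgebra.mem_centralizer_iff]
    rintro g (rfl : g = X)
    exact ⟨(hACc _ hX y hy).1 (Or.inl hXeven),
      (hACc _ hXstar_mem y hy).1 (Or.inl hXstar_even)⟩
  have hBCK : SB ⊔ SC ≤ K := sup_le hSBK hSCK
  have hcomm : ∀ y ∈ K, X * y = y * X := by
    intro y hy
    rw [hK, StarSubalgebra.mem_centralizer_iff] at hy
    exact (hy X rfl).1
  -- densities
  set τ' : Mat N := EBC ρ with hτ'def
  have hτ'mem : τ' ∈ SB ⊔ SC := hEBC.1 ρ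
  have hτ' : τ'.IsHermitian := Stmt10Aux.condexp_herm hEBC hρpd.1
  have hτ'pos : ∀ i, 0 < hτ'.eigenvalues i :=
    Stmt10Aux.condexp_eigen_pos hEBC hρpd hτ'
  set σ : Mat N := EB ρ with hσdef
  have hσmem : σ ∈ SB := hEB.1 ρ
  have hσ : σ.IsHermitian := Stmt10Aux.condexp_herm hEB hρpd.1
  have hσpos : ∀ i, 0 < hσ.eigenvalues i :=
    Stmt10Aux.condexp_eigen_pos hEB hρpd hσ
  -- square roots via the Hermitian functional calculus
  have hs_eq : msqrt τ' = hτ'.cfc Real.sqrt := by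
    rw [msqrt, hτ'.cfc_eq]
  have hw_eq : misqrt σ = hσ.cfc (fun t => (Real.sqrt t)⁻¹) := by
    rw [misqrt, hσ.cfc_eq]
  set s : Mat N := hτ'.cfc Real.sqrt with hsdef
  set w : Mat N := hσ.cfc (fun t => (Real.sqrt t)⁻¹) with hwdef
  have hsK : s ∈ K := Stmt10Aux.hcfc_mem hτ' K (hBCK hτ'mem) _
  have hσK : σ ∈ K := hBCK (le_sup_left (a := SB) (b := SC) hσmem)
  have hwK : w ∈ K := Stmt10Aux.hcfc_mem hσ K hσK _
  have hXs : X * s = s * X := hcomm s hsK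
  have hXw : X * w = w * X := hcomm w hwK
  -- s * X * s = X * τ'
  have hss : s * s = τ' := by
    rw [hsdef, Stmt10Aux.hcfc_mul hτ']
    have : hτ'.cfc (fun t => Real.sqrt t * Real.sqrt t) = hτ'.cfc (fun t => t) :=
      Stmt10Aux.hcfc_congr hτ' (fun i => Real.mul_self_sqrt (hτ'pos i).le)
    rw [this, Stmt10Aux.hcfc_id]
  have hsXs : s * X * s = X * τ' := by
    calc s * X * s = (X * s) * s := by rw [hXs]
    _ = X * (s * s) := by rw [mul_assoc]
    _ = X * τ' := by rw [hss]
  -- E_AB (X * τ') = X * σ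
  have hEABstep : EAB (X * τ') = X * σ := by
    have hXAB : X ∈ SA ⊔ SB := (le_sup_left : SA ≤ SA ⊔ SB) hX
    rw [Stmt10Aux.condexp_mul_left hEAB hXAB τ', hτ'def, hsq1 ρ]
  -- w * σ * w = 1
  have hwσw : w * σ * w = 1 := by
    have k1 : hσ.cfc (fun t => (Real.sqrt t)⁻¹) * hσ.cfc (fun t => t)
        = hσ.cfc (fun t => (Real.sqrt t)⁻¹ * t) := Stmt10Aux.hcfc_mul hσ _ _
    have k2 : hσ.cfc (fun t => (Real.sqrt t)⁻¹ * t) * hσ.cfc (fun t => (Real.sqrt t)⁻¹)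
        = hσ.cfc (fun t => (Real.sqrt t)⁻¹ * t * (Real.sqrt t)⁻¹) :=
      Stmt10Aux.hcfc_mul hσ _ _
    have h2 : hσ.cfc (fun t => (Real.sqrt t)⁻¹ * t * (Real.sqrt t)⁻¹)
        = hσ.cfc (fun _ => 1) := by
      refine Stmt10Aux.hcfc_congr hσ (fun i => ?_)
      have hpos := hσpos i
      have hsq : Real.sqrt (hσ.eigenvalues i) ≠ 0 :=
        (Real.sqrt_pos.mpr hpos).ne'
      rw [← Real.mul_self_sqrt hpos.le]
      field_simp
      rw [Real.sqrt_sq (Real.sqrt_nonneg _)]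
    have key : hσ.cfc (fun t => (Real.sqrt t)⁻¹) * hσ.cfc (fun t => t) *
        hσ.cfc (fun t => (Real.sqrt t)⁻¹) = 1 := by
      rw [k1, k2, h2, Stmt10Aux.hcfc_one hσ]
    rw [Stmt10Aux.hcfc_id hσ] at key
    rw [hwdef]
    exact key
  -- assemble
  rw [hs_eq, hw_eq]
  calc w * EAB (s * X * s) * w = w * EAB (X * τ') * w := by rw [hsXs]
    _ = w * (X * σ) * w := by rw [hEABstep]
    _ = ((w * X) * σ) * w := by rw [← mul_assoc]
    _ = ((X * w) * σ) * w := by rw [hXw]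
    _ = X * (w * σ * w) := by simp only [mul_assoc]
    _ = X := by rw [hwσw, mul_one]
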